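/- Let 𝓘 be a maximal nested collection on the vertex set V of a finite tree Γ and let v ∈ V with {v} ∉ 𝓘. Then v has a neighbor u in Γ with u ∈ I_v, and for any such neighbor u one has I_u ⊊ I_v. -/

import Mathlib

namespace Paper

variable {V : Type*}

/-- The subgraph of `G` induced on `S` is connected (any two vertices of `S` are joined
by a walk inside `S`). -/
def Conn (G : SimpleGraph V) (S : Set V) : Prop := (G.induce S).Preconnected

/-- `C` is a connected component of (the subgraph of `G` induced on) `U`:
a maximal nonempty connected subset of `U`. -/
def IsCompOf (G : SimpleGraph V) (C U : Set V) : Prop :=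
  C.Nonempty ∧ C ⊆ U ∧ Conn G C ∧
    ∀ D : Set V, C ⊆ D → D ⊆ U → Conn G D → D = C

/-- A nested collection on (the vertex set of) `G`: a family of nonempty connected
subsets such that (1) any two members are nested or disjoint, and (2) the connected
components of the union of any pairwise disjoint subfamily are exactly the members of
that subfamily. -/
def Nested (G : SimpleGraph V) (𝓘 : Set (Set V)) : Prop :=
  (∀ S ∈ 𝓘, S.Nonempty ∧ Conn G S) ∧
  (∀ S ∈ 𝓘, ∀ T ∈ 𝓘, S ⊆ T ∨ T ⊆ S ∨ S ∩ T = ∅) ∧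
  (∀ 𝓙 ⊆ 𝓘, (𝓙.Pairwise fun A B => A ∩ B = ∅) →
    ∀ C : Set V, IsCompOf G C (⋃₀ 𝓙) ↔ C ∈ 𝓙)

/-- A maximal nested collection: a nested collection whose union is all of `V` and
which is not properly contained in any other nested collection. -/
def MaxNested (G : SimpleGraph V) (𝓘 : Set (Set V)) : Prop :=
  Nested G 𝓘 ∧ ⋃₀ 𝓘 = Set.univ ∧
    ∀ 𝓙 : Set (Set V), Nested G 𝓙 → 𝓘 ⊆ 𝓙 → 𝓙 = 𝓘

/-- `Iv` assigns to each vertex `v` the smallest element of `𝓘` containing `v`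
(denoted `I_v`). -/
def IsLeastContaining (𝓘 : Set (Set V)) (Iv : V → Set V) : Prop :=
  ∀ v : V, Iv v ∈ 𝓘 ∧ v ∈ Iv v ∧ ∀ J ∈ 𝓘, v ∈ J → Iv v ⊆ J

/-- The vertex set `[x,y]` of the unique path in a tree `G` from `x` to `y`:
the vertices lying on every path from `x` to `y`. -/
def interval (G : SimpleGraph V) (x y : V) : Set V :=
  {u | ∀ p : G.Walk x y, p.IsPath → u ∈ p.support}

/-- `S` is rooted with respect to the nested collection (with least-member function
`Iv`): `S` is nonempty, connected, and, `m` denoting the unique element of `S` with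
`S ⊆ I_m`, for all `i, j ∈ S` one has `i ∈ I_j` iff `j ∈ [i, m]`. -/
def Rooted (G : SimpleGraph V) (Iv : V → Set V) (S : Set V) : Prop :=
  S.Nonempty ∧ Conn G S ∧
    ∃ m ∈ S, S ⊆ Iv m ∧ ∀ i ∈ S, ∀ j ∈ S, (i ∈ Iv j ↔ j ∈ interval G i m)

/-- `S̄ := {v ∈ S : I_v ⊄ S}`. -/
def bar (Iv : V → Set V) (S : Set V) : Set V := {v ∈ S | ¬ Iv v ⊆ S}

/-- `S` is weakly rooted: `S` is nonempty, connected, and either `S̄ = ∅` or `S̄` is a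
(nonempty) connected rooted set. -/
def WeaklyRooted (G : SimpleGraph V) (Iv : V → Set V) (S : Set V) : Prop :=
  S.Nonempty ∧ Conn G S ∧ (bar Iv S = ∅ ∨ Rooted G Iv (bar Iv S))

/-- Two (nonempty connected) subsets `I`, `J` are compatible if `I ⊆ J`, or `J ⊆ I`, or
they are disjoint and no edge of `G` joins a vertex of `I` to a vertex of `J`. -/
def Compatible (G : SimpleGraph V) (I J : Set V) : Prop :=
  I ⊆ J ∨ J ⊆ I ∨ (I ∩ J = ∅ ∧ ∀ a ∈ I, ∀ b ∈ J, ¬ G.Adj a b)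

end Paper


open SimpleGraph

namespace Aux

variable {V : Type*} {G : SimpleGraph V} {S T : Set V}

lemma reach_of_walk {x y : V} (w : G.Walk x y) (hw : ∀ z ∈ w.support, z ∈ S)
    (hx : x ∈ S) (hy : y ∈ S) : (G.induce S).Reachable ⟨x, hx⟩ ⟨y, hy⟩ := by
  induction w with
  | nil => exact Reachable.refl _
  | @cons a b c h p ih =>
    have hb : b ∈ S := hw b (by simp)
    exact (Adj.reachable (show (G.induce S).Adj ⟨a, hx⟩ ⟨b, hb⟩ from h)).trans
      (ih (fun z hz => hw z (by simp [hz])) hb hy)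

lemma conn_iff : Paper.Conn G S ↔
    ∀ x ∈ S, ∀ y ∈ S, ∃ w : G.Walk x y, ∀ z ∈ w.support, z ∈ S := by
  constructor
  · intro h x hx y hy
    obtain ⟨w⟩ := h ⟨x, hx⟩ ⟨y, hy⟩
    refine ⟨w.map (SimpleGraph.Embedding.induce S).toHom, ?_⟩
    intro z hz
    change z ∈ (w.map (SimpleGraph.Embedding.induce S).toHom).support at hz
    rw [SimpleGraph.Walk.support_map, List.mem_map] at hz
    obtain ⟨⟨a, ha⟩, _, rfl⟩ := hz
    exact ha
  · intro h ⟨x, hx⟩ ⟨y, hy⟩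
    obtain ⟨w, hw⟩ := h x hx y hy
    exact reach_of_walk w hw hx hy

lemma crossing {x y : V} (w : G.Walk x y) (hx : x ∈ S) (hy : y ∉ S) :
    ∃ a b, G.Adj a b ∧ a ∈ S ∧ b ∉ S ∧ a ∈ w.support ∧ b ∈ w.support := by
  obtain ⟨d, hd, hfst, hsnd⟩ := w.exists_boundary_dart S hx hy
  exact ⟨d.fst, d.snd, d.adj, hfst, hsnd,
    SimpleGraph.Walk.dart_fst_mem_support_of_mem_darts w hd,
    SimpleGraph.Walk.dart_snd_mem_support_of_mem_darts w hd⟩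

lemma conn_union (hS : Paper.Conn G S) (hT : Paper.Conn G T) {a b : V}
    (ha : a ∈ S) (hb : b ∈ T) (hab : a = b ∨ G.Adj a b) : Paper.Conn G (S ∪ T) := by
  rw [conn_iff] at hS hT ⊢
  have bridge : ∀ x ∈ S, ∀ y ∈ T, ∃ w : G.Walk x y, ∀ z ∈ w.support, z ∈ S ∪ T := by
    intro x hx y hy
    obtain ⟨w1, hw1⟩ := hS x hx a ha
    obtain ⟨w2, hw2⟩ := hT b hb y hy
    rcases hab with rfl | hadj
    · refine ⟨w1.append w2, ?_⟩
      intro z hz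
      rcases (SimpleGraph.Walk.mem_support_append_iff _ _).mp hz with h | h
      · exact Or.inl (hw1 z h)
      · exact Or.inr (hw2 z h)
    · refine ⟨w1.append (SimpleGraph.Walk.cons hadj w2), ?_⟩
      intro z hz
      rcases (SimpleGraph.Walk.mem_support_append_iff _ _).mp hz with h | h
      · exact Or.inl (hw1 z h)
      · rcases List.mem_cons.mp (by rwa [SimpleGraph.Walk.support_cons] at h) with rfl | h
        · exact Or.inl ha
        · exact Or.inr (hw2 z h)
  intro x hx y hy
  rcases hx with hx | hx <;> rcases hy with hy | hy
  · obtain ⟨w, hw⟩ := hS x hx y hy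
    exact ⟨w, fun z hz => Or.inl (hw z hz)⟩
  · exact bridge x hx y hy
  · obtain ⟨w, hw⟩ := bridge y hy x hx
    exact ⟨w.reverse, fun z hz => hw z (by rwa [SimpleGraph.Walk.support_reverse, List.mem_reverse] at hz)⟩
  · obtain ⟨w, hw⟩ := hT x hx y hy
    exact ⟨w, fun z hz => Or.inr (hw z hz)⟩

/-- No edge between disjoint members of a nested collection. -/
lemma no_edge {𝓘 : Set (Set V)} (hN : Paper.Nested G 𝓘) {I J : Set V}
    (hI : I ∈ 𝓘) (hJ : J ∈ 𝓘) (hd : I ∩ J = ∅) {a b : V}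
    (ha : a ∈ I) (hb : b ∈ J) : ¬ G.Adj a b := by
  intro hadj
  have hIJ : ({I, J} : Set (Set V)) ⊆ 𝓘 := by
    intro X hX; rcases hX with rfl | hX
    · exact hI
    · exact (Set.mem_singleton_iff.mp hX) ▸ hJ
  have hne : I ≠ J := by
    rintro rfl
    exact Set.eq_empty_iff_forall_notMem.mp hd a ⟨ha, ha⟩
  have hpw : ({I, J} : Set (Set V)).Pairwise fun A B => A ∩ B = ∅ := by
    intro X hX Y hY hXY
    rcases hX with rfl | hX <;> rcases hY with rfl | hY
    · exact absurd rfl hXY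
    · exact (Set.mem_singleton_iff.mp hY) ▸ hd
    · rw [Set.mem_singleton_iff.mp hX]; rw [Set.inter_comm]; exact hd
    · exact absurd ((Set.mem_singleton_iff.mp hX).trans (Set.mem_singleton_iff.mp hY).symm) hXY
  have hiff := hN.2.2 {I, J} hIJ hpw (I ∪ J)
  have hsu : ⋃₀ ({I, J} : Set (Set V)) = I ∪ J := Set.sUnion_pair I J
  have hconn : Paper.Conn G (I ∪ J) :=
    conn_union (hN.1 I hI).2 (hN.1 J hJ).2 ha hb (Or.inr hadj)
  have hcomp : Paper.IsCompOf G (I ∪ J) (⋃₀ ({I, J} : Set (Set V))) := by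
    refine ⟨⟨a, Or.inl ha⟩, hsu ▸ subset_refl _, hconn, ?_⟩
    intro D hD1 hD2 _
    exact Set.Subset.antisymm (hsu ▸ hD2) hD1
  rcases hiff.mp hcomp with h | h
  · have hbI : b ∈ I := h ▸ (Or.inr hb : b ∈ I ∪ J)
    exact Set.eq_empty_iff_forall_notMem.mp hd b ⟨hbI, hb⟩
  · have haJ : a ∈ J := (Set.mem_singleton_iff.mp h) ▸ (Or.inl ha : a ∈ I ∪ J)
    exact Set.eq_empty_iff_forall_notMem.mp hd a ⟨ha, haJ⟩

end Aux

/-- Let `𝓘` be a maximal nested collection on the vertex set `V` of a finite tree and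
let `v ∈ V` with `{v} ∉ 𝓘`. Then `v` has a neighbor `u` with `u ∈ I_v`, and for any such
neighbor `u` one has `I_u ⊊ I_v`. -/
theorem statement_12 {V : Type*} [Fintype V] (G : SimpleGraph V) (hG : G.IsTree)
    (𝓘 : Set (Set V)) (h𝓘 : Paper.MaxNested G 𝓘)
    (Iv : V → Set V) (hIv : Paper.IsLeastContaining 𝓘 Iv)
    (v : V) (hv : ({v} : Set V) ∉ 𝓘) :
    (∃ u : V, G.Adj v u ∧ u ∈ Iv v) ∧
    (∀ u : V, G.Adj v u → u ∈ Iv v → Iv u ⊂ Iv v) := by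
  obtain ⟨hM𝓘, hvM, hleast⟩ := hIv v
  have hconnM : Paper.Conn G (Iv v) := (h𝓘.1.1 _ hM𝓘).2
  constructor
  · -- Part 1
    have hMne : Iv v ≠ {v} := fun h => hv (h ▸ hM𝓘)
    have hex : ∃ w ∈ Iv v, w ≠ v := by
      by_contra h
      push_neg at h
      exact hMne (Set.Subset.antisymm (fun x hx => h x hx)
        (fun x hx => (Set.mem_singleton_iff.mp hx) ▸ hvM))
    obtain ⟨w, hwM, hwv⟩ := hex
    obtain ⟨p, hp⟩ := (Aux.conn_iff.mp hconnM) v hvM w hwM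
    cases p with
    | nil => exact absurd rfl hwv
    | cons h q => exact ⟨_, h, hp _ (by simp)⟩
  · -- Part 2
    intro u hadj huM
    have hsub : Iv u ⊆ Iv v := (hIv u).2.2 (Iv v) hM𝓘 huM
    rw [Set.ssubset_iff_subset_ne]
    refine ⟨hsub, ?_⟩
    intro heq
    have hvIu : v ∈ Iv u := heq ▸ hvM
    set K : Set V :=
      {x | ∃ w : G.Walk u x, (∀ z ∈ w.support, z ∈ Iv v) ∧ v ∉ w.support} with hKdef
    have hKsub : K ⊆ Iv v := by
      rintro x ⟨w, hw, -⟩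
      exact hw x w.end_mem_support
    have hKnotv : v ∉ K := by
      rintro ⟨w, -, hnv⟩
      exact hnv w.end_mem_support
    have hvu : v ≠ u := hadj.ne
    have huK : u ∈ K := by
      refine ⟨SimpleGraph.Walk.nil, ?_, ?_⟩
      · intro z hz
        simp only [SimpleGraph.Walk.support_nil, List.mem_singleton] at hz
        exact hz ▸ huM
      · simp only [SimpleGraph.Walk.support_nil, List.mem_singleton]
        exact hvu
    have hKext : ∀ x ∈ K, ∀ y, ∀ w' : G.Walk x y,
        (∀ z ∈ w'.support, z ∈ Iv v) → v ∉ w'.support → y ∈ K := by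
      rintro x ⟨w, hw1, hw2⟩ y w' hw'1 hw'2
      refine ⟨w.append w', ?_, ?_⟩
      · intro z hz
        rcases (SimpleGraph.Walk.mem_support_append_iff _ _).mp hz with h | h
        · exact hw1 z h
        · exact hw'1 z h
      · intro hzv
        rcases (SimpleGraph.Walk.mem_support_append_iff _ _).mp hzv with h | h
        · exact hw2 h
        · exact hw'2 h
    have hKadj : ∀ x ∈ K, ∀ y ∈ Iv v, y ≠ v → G.Adj x y → y ∈ K := by
      intro x hx y hy hyv hxy
      refine hKext x hx y (SimpleGraph.Walk.cons hxy SimpleGraph.Walk.nil) ?_ ?_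
      · intro z hz
        simp only [SimpleGraph.Walk.support_cons, SimpleGraph.Walk.support_nil,
          List.mem_cons, List.mem_singleton] at hz
        rcases hz with rfl | rfl | h
        · exact hKsub hx
        · exact hy
        · exact absurd h List.not_mem_nil
      · simp only [SimpleGraph.Walk.support_cons, SimpleGraph.Walk.support_nil,
          List.mem_cons, List.mem_singleton]
        rintro (rfl | rfl | h)
        · exact hKnotv hx
        · exact hyv rfl
        · exact List.not_mem_nil h
    have hKwit : ∀ {x : V} (w : G.Walk u x), (∀ z ∈ w.support, z ∈ Iv v) →
        v ∉ w.support → ∀ z ∈ w.support, z ∈ K := by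
      intro x w hw1 hw2 z hz
      classical
      exact ⟨w.takeUntil z hz,
        fun t ht => hw1 t (SimpleGraph.Walk.support_takeUntil_subset w hz ht),
        fun hv' => hw2 (SimpleGraph.Walk.support_takeUntil_subset w hz hv')⟩
    have hKconn : Paper.Conn G K := by
      rw [Aux.conn_iff]
      rintro x ⟨w1, hw11, hw12⟩ y ⟨w2, hw21, hw22⟩
      refine ⟨w1.reverse.append w2, ?_⟩
      intro z hz
      rcases (SimpleGraph.Walk.mem_support_append_iff _ _).mp hz with h | h
      · rw [SimpleGraph.Walk.support_reverse, List.mem_reverse] at h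
        exact hKwit w1 hw11 hw12 z h
      · exact hKwit w2 hw21 hw22 z h
    have hKnotmem : K ∉ 𝓘 := by
      intro hKm
      exact hKnotv ((hIv u).2.2 K hKm huK hvIu)
    have hKnest : ∀ J ∈ 𝓘, K ⊆ J ∨ J ⊆ K ∨ K ∩ J = ∅ := by
      intro J hJ
      rcases h𝓘.1.2.1 (Iv v) hM𝓘 J hJ with h1 | h1 | h1
      · exact Or.inl (hKsub.trans h1)
      · by_cases hvJ : v ∈ J
        · exact Or.inl (hKsub.trans (hleast J hJ hvJ))
        · by_cases hKJ : K ∩ J = ∅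
          · exact Or.inr (Or.inr hKJ)
          · refine Or.inr (Or.inl ?_)
            obtain ⟨x, hxK, hxJ⟩ := Set.nonempty_iff_ne_empty.mpr hKJ
            intro y hyJ
            obtain ⟨w, hw⟩ := (Aux.conn_iff.mp (h𝓘.1.1 J hJ).2) x hxJ y hyJ
            exact hKext x hxK y w (fun z hz => h1 (hw z hz)) (fun hvw => hvJ (hw v hvw))
      · refine Or.inr (Or.inr ?_)
        exact Set.eq_empty_iff_forall_notMem.mpr
          (fun z hz => Set.eq_empty_iff_forall_notMem.mp h1 z ⟨hKsub hz.1, hz.2⟩)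
    have hNested : Paper.Nested G (insert K 𝓘) := by
      refine ⟨?_, ?_, ?_⟩
      · rintro S (rfl | hS)
        · exact ⟨⟨u, huK⟩, hKconn⟩
        · exact h𝓘.1.1 S hS
      · rintro S (rfl | hS) T (rfl | hT)
        · exact Or.inl (subset_refl _)
        · exact hKnest T hT
        · rcases hKnest S hS with h | h | h
          · exact Or.inr (Or.inl h)
          · exact Or.inl h
          · exact Or.inr (Or.inr (by rw [Set.inter_comm]; exact h))
        · exact h𝓘.1.2.1 S hS T hT
      · intro 𝓙 h𝓙 hpw C
        by_cases hK𝓙 : K ∈ 𝓙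
        case neg =>
          have hsub𝓘 : 𝓙 ⊆ 𝓘 := by
            intro S hS
            rcases h𝓙 hS with rfl | h
            · exact absurd hS hK𝓙
            · exact h
          exact h𝓘.1.2.2 𝓙 hsub𝓘 hpw C
        case pos =>
          set 𝓙₀ := 𝓙 \ {K} with h𝓙₀def
          have h𝓙₀𝓘 : 𝓙₀ ⊆ 𝓘 := by
            rintro S ⟨hS, hSK⟩
            rcases h𝓙 hS with rfl | h
            · exact absurd rfl hSK
            · exact h
          have hpw₀ : 𝓙₀.Pairwise fun A B => A ∩ B = ∅ := hpw.mono Set.diff_subset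
          have hdisj : ∀ J ∈ 𝓙₀, K ∩ J = ∅ := fun J hJ =>
            hpw hK𝓙 hJ.1 (fun h => hJ.2 h.symm)
          have h𝓙eq : 𝓙 = insert K 𝓙₀ := by
            rw [h𝓙₀def, Set.insert_diff_singleton, Set.insert_eq_self.mpr hK𝓙]
          have hU : ⋃₀ 𝓙 = K ∪ ⋃₀ 𝓙₀ := by
            rw [h𝓙eq, Set.sUnion_insert]
          have hF : ∀ x ∈ K, ∀ J ∈ 𝓙₀, ∀ y ∈ J, ¬ G.Adj x y := by
            intro x hx J hJ y hy hxy
            have hJ𝓘 : J ∈ 𝓘 := h𝓙₀𝓘 hJ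
            have hdJ := hdisj J hJ
            rcases h𝓘.1.2.1 (Iv v) hM𝓘 J hJ𝓘 with h1 | h1 | h1
            · exact Set.eq_empty_iff_forall_notMem.mp hdJ u ⟨huK, h1 (hKsub huK)⟩
            · by_cases hyv : y = v
              · subst hyv
                exact Set.eq_empty_iff_forall_notMem.mp hdJ u ⟨huK, hleast J hJ𝓘 hy huM⟩
              · exact Set.eq_empty_iff_forall_notMem.mp hdJ y
                  ⟨hKadj x hx y (h1 hy) hyv hxy, hy⟩
            · exact Aux.no_edge h𝓘.1 hM𝓘 hJ𝓘 h1 (hKsub hx) hy hxy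
          have hNC : ∀ D : Set V, D ⊆ K ∪ ⋃₀ 𝓙₀ → Paper.Conn G D →
              ∀ x, x ∈ D → x ∈ K → ∀ y ∈ D, y ∉ K → False := by
            intro D hD hDconn x hxD hxK y hy hyK
            obtain ⟨w, hw⟩ := (Aux.conn_iff.mp hDconn) x hxD y hy
            obtain ⟨a, b, hab, haK, hbK, -, hbs⟩ := Aux.crossing w hxK hyK
            rcases hD (hw b hbs) with h | h
            · exact hbK h
            · obtain ⟨J, hJ, hbJ⟩ := h
              exact hF a haK J hJ b hbJ hab
          rw [hU]
          have hcomp𝓙₀ := h𝓘.1.2.2 𝓙₀ h𝓙₀𝓘 hpw₀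
          constructor
          · intro hC
            obtain ⟨⟨c, hc⟩, hCsub, hCconn, hCmax⟩ := hC
            by_cases hCK : ∃ k, k ∈ C ∩ K
            · obtain ⟨k, hk⟩ := hCK
              have hCeqK : C = K := by
                have hKC : K ⊆ C := by
                  have hE := hCmax (C ∪ K) Set.subset_union_left
                    (Set.union_subset hCsub Set.subset_union_left)
                    (Aux.conn_union hCconn hKconn hk.1 hk.2 (Or.inl rfl))
                  exact fun z hz => hE ▸ (Or.inr hz : z ∈ C ∪ K)
                refine Set.Subset.antisymm ?_ hKC
                intro y hy
                by_contra hyK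
                exact hNC C hCsub hCconn k hk.1 hk.2 y hy hyK
              rw [hCeqK]
              exact hK𝓙
            · push_neg at hCK
              have hCU₀ : C ⊆ ⋃₀ 𝓙₀ := by
                intro z hz
                rcases hCsub hz with h | h
                · exact absurd ⟨hz, h⟩ (hCK z)
                · exact h
              have hCcomp : Paper.IsCompOf G C (⋃₀ 𝓙₀) := by
                refine ⟨⟨c, hc⟩, hCU₀, hCconn, ?_⟩
                intro D hCD hDsub hDconn
                exact hCmax D hCD (hDsub.trans Set.subset_union_right) hDconn
              exact ((hcomp𝓙₀ C).mp hCcomp).1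
          · intro hC𝓙
            by_cases hCK : C = K
            · subst hCK
              refine ⟨⟨u, huK⟩, Set.subset_union_left, hKconn, ?_⟩
              intro D hKD hDsub hDconn
              refine Set.Subset.antisymm ?_ hKD
              intro y hy
              by_contra hyK
              exact hNC D hDsub hDconn u (hKD huK) huK y hy hyK
            · have hC𝓙₀ : C ∈ 𝓙₀ := ⟨hC𝓙, hCK⟩
              obtain ⟨hCne, hCsub, hCconn, hCmax⟩ := (hcomp𝓙₀ C).mpr hC𝓙₀
              refine ⟨hCne, hCsub.trans Set.subset_union_right, hCconn, ?_⟩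
              intro D hCD hDsub hDconn
              have hDU₀ : D ⊆ ⋃₀ 𝓙₀ := by
                intro z hz
                rcases hDsub hz with h | h
                · exfalso
                  obtain ⟨c, hc⟩ := hCne
                  refine hNC D hDsub hDconn z hz h c (hCD hc) ?_
                  intro hcK
                  exact Set.eq_empty_iff_forall_notMem.mp (hdisj C hC𝓙₀) c ⟨hcK, hc⟩
                · exact h
              exact hCmax D hCD hDU₀ hDconn
    have hins := h𝓘.2.2 (insert K 𝓘) hNested (Set.subset_insert K 𝓘)
    exact hKnotmem (hins ▸ Set.mem_insert K 𝓘)
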